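/- Let e1, e2 ∈ {0, 1, …, N−1}. For every even shift τ = 2τ0 with τ0 an integer, the periodic cross-correlation of the interleaved sequences satisfies R_{S^{e1},S^{e2}}(2τ0) = R_{T^(1)}(τ0) + R_{T^(1)}(e2 − e1 + τ0), where R_{T^(1)} is extended N-periodically to all integer arguments. -/

import Mathlib

/-- The geometric sequence of the first type: `t¹ₙ = 1` iff the Legendre symbol of
`Tr(ω^n)` is `-1`, and `0` otherwise (i.e. when the symbol is `0` or `1`). -/
noncomputable def ntuT1 (p : ℕ) [Fact p.Prime] {F : Type} [Field F]
    [Algebra (ZMod p) F] (ω : F) (n : ℕ) : ZMod 2 :=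
  if legendreSym p ((Algebra.trace (ZMod p) F (ω ^ n)).val : ℤ) = -1 then 1 else 0

/-- The geometric sequence of the second type: `t²ₙ = 0` iff the Legendre symbol of
`Tr(ω^n)` is `1`, and `1` otherwise (i.e. when the symbol is `0` or `-1`). -/
noncomputable def ntuT2 (p : ℕ) [Fact p.Prime] {F : Type} [Field F]
    [Algebra (ZMod p) F] (ω : F) (n : ℕ) : ZMod 2 :=
  if legendreSym p ((Algebra.trace (ZMod p) F (ω ^ n)).val : ℤ) = 1 then 0 else 1

/-- Periodic cross-correlation at shift `τ` of two `N`-periodic binary sequences: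
`R_{s,s'}(τ) = Σ_{i=0}^{N-1} (-1)^{s_i + s'_{i+τ}}`, indices taken modulo `N`. -/
def pcorr (N : ℕ) (s s' : ℕ → ZMod 2) (τ : ℤ) : ℤ :=
  ∑ i ∈ Finset.range N, (-1 : ℤ) ^ ((s i + s' ((((i : ℤ) + τ) % (N : ℤ)).toNat)).val)

/-- The interleaved sequence of `t` and the left shift by `e` of `u`:
`n = 2j ↦ t j`, `n = 2j+1 ↦ u (j + e)`. -/
def ntuInterleave (t u : ℕ → ZMod 2) (e : ℕ) (n : ℕ) : ZMod 2 :=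
  if n % 2 = 0 then t (n / 2) else u (n / 2 + e)

/- ### Auxiliary lemmas -/

lemma ntu_leg (p : ℕ) [Fact p.Prime] (x : ZMod p) :
    legendreSym p ((x.val : ℤ)) = quadraticChar (ZMod p) x := by
  have h : (((x.val : ℤ)) : ZMod p) = x := by
    push_cast
    simp [ZMod.natCast_val, ZMod.cast_id]
  rw [legendreSym, h]

lemma ntu_prime_field (p : ℕ) [Fact p.Prime] (F : Type) [Field F] [Fintype F]
    [Algebra (ZMod p) F] (x : F) (hx : x ^ p = x) :
    ∃ g : ZMod p, algebraMap (ZMod p) F g = x := by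
  classical
  have hp : p.Prime := Fact.out
  set f : Polynomial F := Polynomial.X ^ p - Polynomial.X with hf
  have hf0 : f ≠ 0 := FiniteField.X_pow_card_sub_X_ne_zero F hp.one_lt
  have hdeg : f.natDegree = p := FiniteField.X_pow_card_sub_X_natDegree_eq F hp.one_lt
  have hinj : Function.Injective (algebraMap (ZMod p) F) := (algebraMap (ZMod p) F).injective
  set s : Finset F := Finset.univ.image (algebraMap (ZMod p) F) with hs
  have hscard : s.card = p := by
    rw [hs, Finset.card_image_of_injective _ hinj, Finset.card_univ, ZMod.card]
  have hsub : s ⊆ f.roots.toFinset := by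
    intro y hy
    obtain ⟨g, -, rfl⟩ := Finset.mem_image.mp hy
    rw [Multiset.mem_toFinset, Polynomial.mem_roots hf0]
    simp only [hf, Polynomial.IsRoot, Polynomial.eval_sub, Polynomial.eval_pow,
      Polynomial.eval_X]
    rw [← map_pow, ZMod.pow_card, sub_self]
  have hcardroots : f.roots.toFinset.card ≤ p :=
    le_trans (Multiset.toFinset_card_le _) (le_trans (Polynomial.card_roots' f) (le_of_eq hdeg))
  have hse : s = f.roots.toFinset :=
    Finset.eq_of_subset_of_card_le hsub (by omega)
  have hxmem : x ∈ f.roots.toFinset := by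
    rw [Multiset.mem_toFinset, Polynomial.mem_roots hf0]
    simp only [hf, Polynomial.IsRoot, Polynomial.eval_sub, Polynomial.eval_pow,
      Polynomial.eval_X]
    rw [hx, sub_self]
  rw [← hse] at hxmem
  obtain ⟨g, -, hg⟩ := Finset.mem_image.mp hxmem
  exact ⟨g, hg⟩

lemma ntu_sum_split (f : ℕ → ℤ) (n : ℕ) :
    ∑ i ∈ Finset.range (2 * n), f i =
      (∑ j ∈ Finset.range n, f (2 * j)) + ∑ j ∈ Finset.range n, f (2 * j + 1) := by
  induction n with
  | zero => simp
  | succ n ih =>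
    have h2 : 2 * (n + 1) = (2 * n + 1) + 1 := by ring
    rw [h2, Finset.sum_range_succ, Finset.sum_range_succ, Finset.sum_range_succ,
      Finset.sum_range_succ, ih]
    ring

lemma ntu_shift_one (H : ℕ → ℤ) (n : ℕ) (hH : ∀ j, H (j + n) = H j) :
    ∑ j ∈ Finset.range n, H (j + 1) = ∑ j ∈ Finset.range n, H j := by
  cases n with
  | zero => simp
  | succ n =>
    rw [Finset.sum_range_succ, Finset.sum_range_succ' (fun j => H j) n]
    have h0 : H (n + 1) = H 0 := by simpa using hH 0
    rw [h0]

lemma ntu_shift (H : ℕ → ℤ) (n : ℕ) (hH : ∀ j, H (j + n) = H j) (c : ℕ) :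
    ∑ j ∈ Finset.range n, H (j + c) = ∑ j ∈ Finset.range n, H j := by
  induction c with
  | zero => simp
  | succ c ih =>
    have hstep := ntu_shift_one (fun i => H (i + c)) n (fun j => by
      show H (j + n + c) = H (j + c)
      rw [show j + n + c = j + c + n from by ring, hH])
    have e1 : ∑ j ∈ Finset.range n, H (j + (c + 1))
        = ∑ j ∈ Finset.range n, H ((j + 1) + c) :=
      Finset.sum_congr rfl fun j _ => by congr 1; omega
    exact e1.trans (hstep.trans ih)

lemma ntu_ileave_even (t u : ℕ → ZMod 2) (e j : ℕ) : ntuInterleave t u e (2 * j) = t j := by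
  have h1 : (2 * j) % 2 = 0 := by omega
  have h2 : 2 * j / 2 = j := by omega
  simp [ntuInterleave, h1, h2]

lemma ntu_ileave_odd (t u : ℕ → ZMod 2) (e j : ℕ) :
    ntuInterleave t u e (2 * j + 1) = u (j + e) := by
  have h1 : (2 * j + 1) % 2 = 1 := by omega
  have h2 : (2 * j + 1) / 2 = j := by omega
  simp [ntuInterleave, h1, h2]

theorem stmt4 (p m : ℕ) [Fact p.Prime] (hp2 : p ≠ 2) (hm : 1 < m)
    (F : Type) [Field F] [Fintype F] [Algebra (ZMod p) F]
    (hcard : Fintype.card F = p ^ m) (ω : F) (hω : orderOf ω = p ^ m - 1)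
    (N : ℕ) (hN : N = 2 * (p ^ m - 1) / (p - 1)) (e1 e2 : ℕ) (he1 : e1 < N) (he2 : e2 < N) (τ0 : ℤ) :
    pcorr (2 * N) (ntuInterleave (ntuT1 p ω) (ntuT2 p ω) e1) (ntuInterleave (ntuT1 p ω) (ntuT2 p ω) e2) (2 * τ0)
      = pcorr N (ntuT1 p ω) (ntuT1 p ω) τ0 + pcorr N (ntuT1 p ω) (ntuT1 p ω) ((e2 : ℤ) - (e1 : ℤ) + τ0) := by
  have hp : p.Prime := Fact.out
  have hp3 : 3 ≤ p := by
    rcases hp.two_le.lt_or_eq with h | h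
    · omega
    · omega
  have hpow : p < p ^ m := by
    calc p = p ^ 1 := (pow_one p).symm
    _ < p ^ m := Nat.pow_lt_pow_right hp.one_lt hm
  set k : ℕ := (p ^ m - 1) / (p - 1) with hkdef
  have hdvd : (p - 1) ∣ (p ^ m - 1) := by simpa using Nat.sub_dvd_pow_sub_pow p 1 m
  have hk : k * (p - 1) = p ^ m - 1 := Nat.div_mul_cancel hdvd
  have hkpos : 0 < k := by
    rcases Nat.eq_zero_or_pos k with h | h
    · rw [h, zero_mul] at hk; omega
    · exact h
  have hNk : N = 2 * k := by rw [hN, hkdef, Nat.mul_div_assoc 2 hdvd]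
  have hNpos : 0 < N := by omega
  -- order of ω^k is p - 1
  have hkdvd : k ∣ p ^ m - 1 := ⟨p - 1, hk.symm⟩
  have horder : orderOf (ω ^ k) = p - 1 := by
    rw [orderOf_pow' ω hkpos.ne', hω, Nat.gcd_eq_right hkdvd, ← hk,
      Nat.mul_div_cancel_left _ hkpos]
  have hfix : (ω ^ k) ^ p = ω ^ k := by
    have h1 : (ω ^ k) ^ (p - 1) = 1 := by rw [← horder]; exact pow_orderOf_eq_one _
    calc (ω ^ k) ^ p = (ω ^ k) ^ (p - 1) * (ω ^ k) := by
          rw [← pow_succ]; congr 1; omega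
    _ = ω ^ k := by rw [h1, one_mul]
  obtain ⟨g, hg⟩ := ntu_prime_field p F (ω ^ k) hfix
  have hgord : orderOf g = p - 1 := by
    rw [← horder, ← hg]
    exact (orderOf_injective (algebraMap (ZMod p) F).toMonoidHom
      (algebraMap (ZMod p) F).injective g).symm
  have hgp1 : g ^ (p - 1) = 1 := by rw [← hgord]; exact pow_orderOf_eq_one g
  have hgne : g ≠ 0 := by
    intro h
    rw [h, zero_pow (by omega : p - 1 ≠ 0)] at hgp1
    exact zero_ne_one hgp1
  have hns : ¬ IsSquare g := by
    rintro ⟨h, rfl⟩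
    have hh : h ≠ 0 := by rintro rfl; simp at hgne
    obtain ⟨t, ht⟩ := hp.odd_of_ne_two hp2
    have h2 : (h * h) ^ ((p - 1) / 2) = 1 := by
      rw [← sq, ← pow_mul, show 2 * ((p - 1) / 2) = p - 1 from by omega]
      exact ZMod.pow_card_sub_one_eq_one hh
    have hdv := orderOf_dvd_of_pow_eq_one h2
    rw [hgord] at hdv
    have := Nat.le_of_dvd (by omega) hdv
    omega
  have hχg : quadraticChar (ZMod p) g = -1 :=
    quadraticChar_neg_one_iff_not_isSquare.mpr hns
  -- trace relations
  have hstep : ∀ n : ℕ, Algebra.trace (ZMod p) F (ω ^ (n + k))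
      = g * Algebra.trace (ZMod p) F (ω ^ n) := by
    intro n
    have h : ω ^ (n + k) = g • ω ^ n := by rw [Algebra.smul_def, hg]; ring
    rw [h, map_smul, smul_eq_mul]
  have hχstep : ∀ n : ℕ, quadraticChar (ZMod p) (Algebra.trace (ZMod p) F (ω ^ (n + k)))
      = - quadraticChar (ZMod p) (Algebra.trace (ZMod p) F (ω ^ n)) := by
    intro n
    rw [hstep, map_mul, hχg]
    ring
  have ht1 : ∀ n : ℕ, ntuT1 p ω n
      = if quadraticChar (ZMod p) (Algebra.trace (ZMod p) F (ω ^ n)) = -1 then 1 else 0 := by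
    intro n
    simp only [ntuT1, ntu_leg]
  have ht1k : ∀ n : ℕ, ntuT1 p ω (n + k)
      = if quadraticChar (ZMod p) (Algebra.trace (ZMod p) F (ω ^ n)) = 1 then 1 else 0 := by
    intro n
    rw [ht1, hχstep]
    simp only [show ∀ a : ℤ, (-a = -1) ↔ (a = 1) from fun a => by omega]
  have ht1per : ∀ n : ℕ, ntuT1 p ω (n + N) = ntuT1 p ω n := by
    intro n
    rw [hNk, show n + 2 * k = n + k + k from by ring, ht1, hχstep, hχstep, neg_neg, ← ht1]
  have ht2 : ∀ n : ℕ, ntuT2 p ω n = ntuT1 p ω (n + k) + 1 := by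
    intro n
    rw [ht1k]
    simp only [ntuT2, ntu_leg]
    by_cases hc : quadraticChar (ZMod p) (Algebra.trace (ZMod p) F (ω ^ n)) = 1
    · rw [if_pos hc, if_pos hc]; decide
    · rw [if_neg hc, if_neg hc]; decide
  -- the ℤ-indexed periodic extension of t1
  set T : ℤ → ZMod 2 := fun z => ntuT1 p ω ((z % (N : ℤ)).toNat) with hTdef
  have hT0 : ∀ n : ℕ, ntuT1 p ω n = T (n : ℤ) := by
    intro n
    have hper : Function.Periodic (ntuT1 p ω) N := ht1per
    have h1 : ((n : ℤ) % (N : ℤ)).toNat = n % N := by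
      rw [← Int.natCast_mod, Int.toNat_natCast]
    rw [hTdef]
    simp only
    rw [h1, hper.map_mod_nat]
  have hTcong : ∀ x y : ℤ, x % N = y % N → T x = T y := by
    intro x y hxy
    rw [hTdef]
    simp only [hxy]
  have hTper : ∀ z : ℤ, T (z + N) = T z := by
    intro z
    refine hTcong _ _ ?_
    rw [show z + (N : ℤ) = z + (N : ℤ) * 1 from by ring, Int.add_mul_emod_self_left]
  have hTc : ∀ x c : ℤ, T (x % N + c) = T (x + c) := by
    intro x c
    refine hTcong _ _ ?_
    conv_rhs => rw [← Int.emod_add_mul_ediv x N]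
    rw [show x % N + (N : ℤ) * (x / N) + c = (x % N + c) + (N : ℤ) * (x / N) from by ring,
      Int.add_mul_emod_self_left]
  -- mod computations for even and odd positions
  have hNne : (N : ℤ) ≠ 0 := by exact_mod_cast hNpos.ne'
  have hNposZ : (0 : ℤ) < (N : ℤ) := by exact_mod_cast hNpos
  have hmod_even : ∀ a : ℤ, (2 * a) % (2 * (N : ℤ)) = 2 * (a % N) :=
    fun a => Int.mul_emod_mul_of_pos a (N : ℤ) (by norm_num)
  have hmod_odd : ∀ a : ℤ, (2 * a + 1) % (2 * (N : ℤ)) = 2 * (a % N) + 1 := by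
    intro a
    have hb1 : 0 ≤ a % N := Int.emod_nonneg a hNne
    have hb2 : a % N < N := Int.emod_lt_of_pos a hNposZ
    conv_lhs => rw [← Int.emod_add_mul_ediv a N]
    rw [show 2 * (a % N + (N : ℤ) * (a / N)) + 1
        = (2 * (a % N) + 1) + (2 * (N : ℤ)) * (a / N) from by ring,
      Int.add_mul_emod_self_left, Int.emod_eq_of_lt (by omega) (by omega)]
  -- split the big sum
  rw [pcorr, ntu_sum_split]
  have heven : (∑ j ∈ Finset.range N,
      (-1 : ℤ) ^ ((ntuInterleave (ntuT1 p ω) (ntuT2 p ω) e1 (2 * j) +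
        ntuInterleave (ntuT1 p ω) (ntuT2 p ω) e2
          ((((2 * j : ℕ) : ℤ) + 2 * τ0) % ((2 * N : ℕ) : ℤ)).toNat).val))
      = pcorr N (ntuT1 p ω) (ntuT1 p ω) τ0 := by
    rw [pcorr]
    refine Finset.sum_congr rfl fun j _ => ?_
    have hnn : 0 ≤ ((j : ℤ) + τ0) % N := Int.emod_nonneg _ hNne
    have hidx : ((((2 * j : ℕ) : ℤ) + 2 * τ0) % ((2 * N : ℕ) : ℤ)).toNat
        = 2 * (((j : ℤ) + τ0) % N).toNat := by
      rw [show (((2 * j : ℕ) : ℤ) + 2 * τ0) = 2 * ((j : ℤ) + τ0) from by push_cast; ring,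
        show ((2 * N : ℕ) : ℤ) = 2 * (N : ℤ) from by push_cast; ring, hmod_even]
      omega
    rw [hidx, ntu_ileave_even, ntu_ileave_even]
  rw [heven]
  congr 1
  -- odd part
  have hodd1 : ∀ j : ℕ,
      (-1 : ℤ) ^ ((ntuInterleave (ntuT1 p ω) (ntuT2 p ω) e1 (2 * j + 1) +
        ntuInterleave (ntuT1 p ω) (ntuT2 p ω) e2
          ((((2 * j + 1 : ℕ) : ℤ) + 2 * τ0) % ((2 * N : ℕ) : ℤ)).toNat).val)
      = (fun nn : ℕ => (-1 : ℤ) ^ ((T (nn : ℤ) + T ((nn : ℤ) + (τ0 + e2 - e1))).val)) (j + (e1 + k)) := by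
    intro j
    have hnn : 0 ≤ ((j : ℤ) + τ0) % N := Int.emod_nonneg _ hNne
    have hidx : ((((2 * j + 1 : ℕ) : ℤ) + 2 * τ0) % ((2 * N : ℕ) : ℤ)).toNat
        = 2 * (((j : ℤ) + τ0) % N).toNat + 1 := by
      rw [show (((2 * j + 1 : ℕ) : ℤ) + 2 * τ0) = 2 * ((j : ℤ) + τ0) + 1 from by push_cast; ring,
        show ((2 * N : ℕ) : ℤ) = 2 * (N : ℤ) from by push_cast; ring, hmod_odd]
      omega
    rw [hidx, ntu_ileave_odd, ntu_ileave_odd, ht2, ht2]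
    have hzsum : ∀ x y : ZMod 2, (x + 1 + (y + 1)) = x + y := by decide
    rw [hzsum]
    have hcast : ((((j : ℤ) + τ0) % N).toNat : ℤ) = ((j : ℤ) + τ0) % N :=
      Int.toNat_of_nonneg hnn
    have hA : ntuT1 p ω (j + e1 + k) = T ((j + (e1 + k) : ℕ) : ℤ) := by
      rw [show j + e1 + k = j + (e1 + k) from by ring, hT0]
    have hB : ntuT1 p ω ((((j : ℤ) + τ0) % N).toNat + e2 + k)
        = T (((j + (e1 + k) : ℕ) : ℤ) + (τ0 + e2 - e1)) := by
      rw [show (((j : ℤ) + τ0) % N).toNat + e2 + k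
          = (((j : ℤ) + τ0) % N).toNat + (e2 + k) from by ring, hT0]
      rw [show (((((j : ℤ) + τ0) % N).toNat + (e2 + k) : ℕ) : ℤ)
          = ((j : ℤ) + τ0) % N + ((e2 : ℤ) + k) from by push_cast [hcast]; ring]
      rw [hTc]
      refine hTcong _ _ ?_
      rw [show (j : ℤ) + τ0 + ((e2 : ℤ) + k) = ((j + (e1 + k) : ℕ) : ℤ) + (τ0 + e2 - e1)
        from by push_cast; ring]
    rw [hA, hB]
  rw [Finset.sum_congr rfl fun j _ => hodd1 j]
  have hHper : ∀ j : ℕ,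
      (fun nn : ℕ => (-1 : ℤ) ^ ((T (nn : ℤ) + T ((nn : ℤ) + (τ0 + e2 - e1))).val)) (j + N)
      = (fun nn : ℕ => (-1 : ℤ) ^ ((T (nn : ℤ) + T ((nn : ℤ) + (τ0 + e2 - e1))).val)) j := by
    intro j
    have h1 : T ((j + N : ℕ) : ℤ) = T ((j : ℕ) : ℤ) := by
      rw [show ((j + N : ℕ) : ℤ) = (j : ℤ) + N from by push_cast; ring, hTper]
    have h2 : T (((j + N : ℕ) : ℤ) + (τ0 + e2 - e1)) = T (((j : ℕ) : ℤ) + (τ0 + e2 - e1)) := by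
      rw [show ((j + N : ℕ) : ℤ) + (τ0 + e2 - e1)
          = ((j : ℤ) + (τ0 + e2 - e1)) + N from by push_cast; ring, hTper]
    simp only [h1, h2]
  have hsh := ntu_shift
    (fun nn : ℕ => (-1 : ℤ) ^ ((T (nn : ℤ) + T ((nn : ℤ) + (τ0 + e2 - e1))).val)) N hHper (e1 + k)
  refine hsh.trans ?_
  rw [pcorr]
  refine Finset.sum_congr rfl fun j _ => ?_
  have hx2 : ntuT1 p ω ((((j : ℤ) + ((e2 : ℤ) - e1 + τ0)) % N).toNat)
      = T ((j : ℤ) + (τ0 + e2 - e1)) := by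
    rw [show (j : ℤ) + ((e2 : ℤ) - e1 + τ0) = (j : ℤ) + (τ0 + e2 - e1) from by ring]
  rw [← hT0 j, hx2]
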